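/- For every γ > 1/2 and every λ > 2 it holds that G_γ(λ) ≥ 2 B(γ − 1/2, 3/2) (λ − 2)^γ and G_γ(λ) ≥ B(γ − 1/2, 2) (λ − 2)^{γ + 1/2}. -/
import Mathlib


/-- `G_γ(λ) = ∫₂^λ (E² − 4)^{1/2} (λ − E)^{γ − 3/2} dE`. -/
noncomputable def Ggamma (γ lam : ℝ) : ℝ :=
  ∫ E in (2 : ℝ)..lam, Real.sqrt (E ^ 2 - 4) * (lam - E) ^ (γ - 3 / 2)

/-- The Euler Beta function `B(x, y) = Γ(x)Γ(y)/Γ(x + y)`. -/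
noncomputable def eulerBeta (x y : ℝ) : ℝ :=
  Real.Gamma x * Real.Gamma y / Real.Gamma (x + y)

lemma real_beta_integral (a b : ℝ) (ha : 0 < a) (hb : 0 < b) :
    ∫ x in (0:ℝ)..1, x ^ (a - 1) * (1 - x) ^ (b - 1) = eulerBeta a b := by
  have key := Complex.Gamma_mul_Gamma_eq_betaIntegral (s := (a:ℂ)) (t := (b:ℂ))
    (by simpa using ha) (by simpa using hb)
  have hI : Complex.betaIntegral a b
      = ((∫ x in (0:ℝ)..1, x ^ (a - 1) * (1 - x) ^ (b - 1) : ℝ) : ℂ) := by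
    rw [Complex.betaIntegral, ← intervalIntegral.integral_ofReal]
    apply intervalIntegral.integral_congr
    intro x hx
    rw [Set.uIcc_of_le (by norm_num : (0:ℝ) ≤ 1)] at hx
    have h1 : (0:ℝ) ≤ x := hx.1
    have h2 : (0:ℝ) ≤ 1 - x := by linarith [hx.2]
    show (x:ℂ) ^ ((a:ℂ) - 1) * (1 - (x:ℂ)) ^ ((b:ℂ) - 1) = _
    rw [show ((a:ℂ) - 1) = ((a - 1 : ℝ) : ℂ) by push_cast; ring,
      show ((b:ℂ) - 1) = ((b - 1 : ℝ) : ℂ) by push_cast; ring,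
      show (1 - (x:ℂ)) = ((1 - x : ℝ) : ℂ) by push_cast; ring,
      ← Complex.ofReal_cpow h1, ← Complex.ofReal_cpow h2]
    push_cast
    ring
  rw [hI] at key
  have hab : Real.Gamma (a + b) ≠ 0 := (Real.Gamma_pos_of_pos (by linarith)).ne'
  have : Real.Gamma a * Real.Gamma b
      = Real.Gamma (a + b) * ∫ x in (0:ℝ)..1, x ^ (a - 1) * (1 - x) ^ (b - 1) := by
    have := key
    rw [← Complex.ofReal_add, Complex.Gamma_ofReal, Complex.Gamma_ofReal,
      Complex.Gamma_ofReal] at this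
    exact_mod_cast this
  rw [eulerBeta, this]
  field_simp

lemma scaled_beta (a b s : ℝ) (ha : 0 < a) (hb : 0 < b) (hs : 0 < s) :
    ∫ t in (0:ℝ)..s, t ^ (a - 1) * (s - t) ^ (b - 1)
      = eulerBeta a b * s ^ (a + b - 1) := by
  have h := intervalIntegral.smul_integral_comp_mul_left
    (fun t => t ^ (a - 1) * (s - t) ^ (b - 1)) (a := 0) (b := 1) s
  simp only [mul_zero, mul_one] at h
  rw [← h]
  have : ∫ x in (0:ℝ)..1, (s * x) ^ (a - 1) * (s - s * x) ^ (b - 1)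
      = (s ^ (a - 1) * s ^ (b - 1)) * ∫ x in (0:ℝ)..1, x ^ (a - 1) * (1 - x) ^ (b - 1) := by
    rw [← intervalIntegral.integral_const_mul]
    apply intervalIntegral.integral_congr
    intro x hx
    rw [Set.uIcc_of_le (by norm_num : (0:ℝ) ≤ 1)] at hx
    have h1 : (0:ℝ) ≤ x := hx.1
    have h2 : (0:ℝ) ≤ 1 - x := by linarith [hx.2]
    show (s * x) ^ (a - 1) * (s - s * x) ^ (b - 1) = _
    rw [show s - s * x = s * (1 - x) by ring, Real.mul_rpow hs.le h1, Real.mul_rpow hs.le h2]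
    ring
  rw [this, real_beta_integral a b ha hb, smul_eq_mul]
  rw [show a + b - 1 = 1 + (a - 1) + (b - 1) by ring, Real.rpow_add hs, Real.rpow_add hs,
    Real.rpow_one]
  ring

lemma eulerBeta_comm (x y : ℝ) : eulerBeta x y = eulerBeta y x := by
  rw [eulerBeta, eulerBeta, mul_comm, add_comm]

/-- For every `γ > 1/2` and `λ > 2`,
`G_γ(λ) ≥ 2 B(γ − 1/2, 3/2) (λ − 2)^γ` and `G_γ(λ) ≥ B(γ − 1/2, 2) (λ − 2)^{γ + 1/2}`. -/
theorem Ggamma_lower_bounds (γ lam : ℝ) (hγ : 1 / 2 < γ) (hlam : 2 < lam) :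
    2 * eulerBeta (γ - 1 / 2) (3 / 2) * (lam - 2) ^ γ ≤ Ggamma γ lam
    ∧ eulerBeta (γ - 1 / 2) 2 * (lam - 2) ^ (γ + 1 / 2) ≤ Ggamma γ lam := by
  set e : ℝ := γ - 3 / 2 with he
  have hs : (0:ℝ) < lam - 2 := by linarith
  have he1 : (-1:ℝ) < e := by rw [he]; linarith
  have hbase : IntervalIntegrable (fun E => (lam - E) ^ e) MeasureTheory.volume 2 lam := by
    have := (intervalIntegral.intervalIntegrable_rpow' he1 (a := 0) (b := lam - 2)).comp_sub_left
      lam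
    simpa using this.symm
  have hIf : IntervalIntegrable (fun E => Real.sqrt (E ^ 2 - 4) * (lam - E) ^ e)
      MeasureTheory.volume 2 lam :=
    hbase.continuousOn_mul (by fun_prop)
  have hrpow_sqrt : (fun E : ℝ => (E - 2) ^ ((1:ℝ)/2)) = fun E => Real.sqrt (E - 2) := by
    funext E; rw [Real.sqrt_eq_rpow]
  have hIg1 : IntervalIntegrable (fun E => Real.sqrt (E - 2) * (lam - E) ^ e)
      MeasureTheory.volume 2 lam :=
    hbase.continuousOn_mul (by fun_prop)
  have hIg2 : IntervalIntegrable (fun E => (E - 2) * (lam - E) ^ e)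
      MeasureTheory.volume 2 lam :=
    hbase.continuousOn_mul (by fun_prop)
  -- value of the comparison integrals via the Beta function
  have key : ∀ a : ℝ, 0 < a →
      (∫ E in (2:ℝ)..lam, (E - 2) ^ (a - 1) * (lam - E) ^ e)
        = eulerBeta a (γ - 1/2) * (lam - 2) ^ (a + γ - 3/2) := by
    intro a ha
    have h := intervalIntegral.integral_comp_sub_right
      (a := 2) (b := lam) (fun t => t ^ (a - 1) * ((lam - 2) - t) ^ (e)) 2
    norm_num at h
    rw [h, show e = (γ - 1/2) - 1 by rw [he]; ring,
      scaled_beta a (γ - 1/2) (lam - 2) ha (by linarith) hs]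
    congr 1
    ring_nf
  constructor
  · -- first bound
    have hmono := intervalIntegral.integral_mono_on (a := 2) (b := lam)
      (f := fun E => 2 * (Real.sqrt (E - 2) * (lam - E) ^ e))
      (g := fun E => Real.sqrt (E ^ 2 - 4) * (lam - E) ^ e)
      (μ := MeasureTheory.volume) (by linarith) (hIg1.const_mul 2) hIf ?_
    · have hval := key (3/2) (by norm_num)
      rw [intervalIntegral.integral_const_mul] at hmono
      rw [show ((3:ℝ)/2 + γ - 3/2) = γ by ring] at hval
      have hsqint : (∫ E in (2:ℝ)..lam, Real.sqrt (E - 2) * (lam - E) ^ e)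
          = ∫ E in (2:ℝ)..lam, (E - 2) ^ ((3:ℝ)/2 - 1) * (lam - E) ^ e := by
        apply intervalIntegral.integral_congr
        intro x _
        show Real.sqrt (x - 2) * (lam - x) ^ e = (x - 2) ^ ((3:ℝ)/2 - 1) * (lam - x) ^ e
        norm_num [Real.sqrt_eq_rpow]
      calc 2 * eulerBeta (γ - 1/2) (3/2) * (lam - 2) ^ γ
          = 2 * (eulerBeta (3/2) (γ - 1/2) * (lam - 2) ^ γ) := by
            rw [eulerBeta_comm]; ring
        _ = 2 * ∫ E in (2:ℝ)..lam, Real.sqrt (E - 2) * (lam - E) ^ e := by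
            rw [hsqint, hval]
        _ ≤ _ := hmono
    · intro x hx
      have hx2 : (0:ℝ) ≤ x - 2 := by linarith [hx.1]
      have hxl : (0:ℝ) ≤ lam - x := by linarith [hx.2]
      have hsq : Real.sqrt (x ^ 2 - 4) = Real.sqrt (x - 2) * Real.sqrt (x + 2) := by
        rw [← Real.sqrt_mul hx2]; congr 1; ring
      have h4 : (2:ℝ) ≤ Real.sqrt (x + 2) := by
        have hnn := Real.sqrt_nonneg (x + 2)
        have hsq2 := Real.sq_sqrt (show (0:ℝ) ≤ x + 2 by linarith [hx.1])
        nlinarith [hx.1]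
      have hmain : 2 * Real.sqrt (x - 2) ≤ Real.sqrt (x ^ 2 - 4) := by
        rw [hsq]
        nlinarith [Real.sqrt_nonneg (x - 2)]
      exact mul_le_mul_of_nonneg_right hmain (Real.rpow_nonneg hxl e) |>.trans_eq (by ring)
        |>.trans_eq' (by ring)
  · -- second bound
    have hmono := intervalIntegral.integral_mono_on (a := 2) (b := lam)
      (f := fun E => (E - 2) * (lam - E) ^ e)
      (g := fun E => Real.sqrt (E ^ 2 - 4) * (lam - E) ^ e)
      (μ := MeasureTheory.volume) (by linarith) hIg2 hIf ?_
    · have hval := key 2 (by norm_num)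
      rw [show ((2:ℝ) + γ - 3/2) = γ + 1/2 by ring] at hval
      have hlin : (∫ E in (2:ℝ)..lam, (E - 2) * (lam - E) ^ e)
          = ∫ E in (2:ℝ)..lam, (E - 2) ^ ((2:ℝ) - 1) * (lam - E) ^ e := by
        apply intervalIntegral.integral_congr
        intro x _
        show (x - 2) * (lam - x) ^ e = (x - 2) ^ ((2:ℝ) - 1) * (lam - x) ^ e
        norm_num
      rw [eulerBeta_comm, ← hval, ← hlin]
      exact hmono
    · intro x hx
      have hx2 : (0:ℝ) ≤ x - 2 := by linarith [hx.1]
      have hxl : (0:ℝ) ≤ lam - x := by linarith [hx.2]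
      have hmain : x - 2 ≤ Real.sqrt (x ^ 2 - 4) := by
        have hnn := Real.sqrt_nonneg (x ^ 2 - 4)
        have hsq2 := Real.sq_sqrt (show (0:ℝ) ≤ x ^ 2 - 4 by nlinarith [hx.1])
        nlinarith [hx.1]
      exact mul_le_mul_of_nonneg_right hmain (Real.rpow_nonneg hxl e)
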